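/- Let n and k be integers with 2 ≤ k ≤ n. If e · (1 + Σ_{j=2}^{k} C(k,j)·C(n−k, k−j)) · k! · 2^{−k(k−1)/2} < 1 (where e is Euler's number and the inequality is over the reals), then there exists a tournament on n vertices containing no transitive subtournament on k vertices. (This is the Lovász Local Lemma step in the proof of Theorem 4.2, using that each k-set event has probability k!/2^{C(k,2)} and depends on at most Σ_{j=2}^{k} C(k,j)·C(n−k,k−j) other such events; it yields F(n) < 2log₂ n − 1 + o(1).) -/

import Mathlib

/-- A tournament on `{0,…,r-1}`: loopless, and for every pair of distinct
vertices exactly one of the two arcs is present. -/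
structure Tournament (r : ℕ) where
  arc : Fin r → Fin r → Bool
  loopless : ∀ i, arc i i = false
  oneOf : ∀ i j, i ≠ j → (arc i j = true ↔ ¬ arc j i = true)

/-- `S` carries a transitive subtournament: there is a linear ordering of `S` such
that the arc `(u,v)` is present whenever `u` precedes `v`. -/
def Tournament.HasTransTournOn {r : ℕ} (T : Tournament r) (S : Finset (Fin r)) : Prop :=
  ∃ l : List (Fin r), l.Nodup ∧ l.toFinset = S ∧
    l.Pairwise fun u v => T.arc u v = true

open Finset
section LLL
variable {κ ι : Type*} [Fintype κ] [DecidableEq κ] [Fintype ι] [DecidableEq ι]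
open scoped Classical

def TDependsOn (A : Finset (κ → Bool)) (I : Finset κ) : Prop :=
  ∀ f g : κ → Bool, (∀ x ∈ I, f x = g x) → f ∈ A → g ∈ A

lemma dep_card_inter (A B : Finset (κ → Bool)) {I J : Finset κ}
    (hA : TDependsOn A I) (hB : TDependsOn B J) (hIJ : Disjoint I J) :
    (A ∩ B).card * Fintype.card (κ → Bool) = A.card * B.card := by
  have key : ((A ∩ B) ×ˢ (univ : Finset (κ → Bool))).card = (A ×ˢ B).card := by
    apply Finset.card_nbij'
      (i := fun uv => ((fun x => if x ∈ I then uv.1 x else uv.2 x),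
                       (fun x => if x ∈ I then uv.2 x else uv.1 x)))
      (j := fun uv => ((fun x => if x ∈ I then uv.1 x else uv.2 x),
                       (fun x => if x ∈ I then uv.2 x else uv.1 x)))
    · rintro ⟨c, w⟩ hcw
      simp only [Finset.mem_coe, mem_product, mem_inter] at hcw ⊢
      constructor
      · exact hA c _ (fun x hx => by simp [if_pos hx]) hcw.1.1
      · refine hB c _ (fun x hx => ?_) hcw.1.2
        have : x ∉ I := fun hxI => (Finset.disjoint_left.mp hIJ hxI) hx
        simp [this]
    · rintro ⟨a, b⟩ hab
      simp only [Finset.mem_coe, mem_product, mem_inter] at hab ⊢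
      refine ⟨⟨?_, ?_⟩, mem_univ _⟩
      · exact hA a _ (fun x hx => by simp [if_pos hx]) hab.1
      · refine hB b _ (fun x hx => ?_) hab.2
        have : x ∉ I := fun hxI => (Finset.disjoint_left.mp hIJ hxI) hx
        simp [this]
    · rintro ⟨c, w⟩ _
      refine Prod.ext ?_ ?_ <;> · funext x; by_cases hx : x ∈ I <;> simp [hx]
    · rintro ⟨a, b⟩ _
      refine Prod.ext ?_ ?_ <;> · funext x; by_cases hx : x ∈ I <;> simp [hx]
  rw [Finset.card_product, Finset.card_product, Finset.card_univ] at key; exact key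

def BadSet (A : ι → Finset (κ → Bool)) (S : Finset ι) : Finset (κ → Bool) :=
  univ.filter fun f => ∀ j ∈ S, f ∉ A j

lemma badSet_insert (A : ι → Finset (κ → Bool)) (S : Finset ι) (j : ι) :
    BadSet A (insert j S) = BadSet A S \ A j := by
  ext f; simp [BadSet]; tauto

lemma badSet_mono (A : ι → Finset (κ → Bool)) {S T : Finset ι} (h : S ⊆ T) :
    BadSet A T ⊆ BadSet A S := by
  intro f hf; simp only [BadSet, mem_filter] at *
  exact ⟨hf.1, fun j hj => hf.2 j (h hj)⟩

lemma depends_badSet (A : ι → Finset (κ → Bool)) (C : ι → Finset κ)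
    (hdep : ∀ i, TDependsOn (A i) (C i)) (S : Finset ι) :
    TDependsOn (BadSet A S) (S.biUnion C) := by
  intro f g hfg hf
  simp only [BadSet, mem_filter, mem_univ, true_and] at hf ⊢
  intro j hj hg
  exact hf j hj (hdep j g f (fun x hx => (hfg x (mem_biUnion.mpr ⟨j, hj, hx⟩)).symm) hg)

lemma card_badSet_insert (A : ι → Finset (κ → Bool)) (S : Finset ι) (j : ι) :
    ((BadSet A (insert j S)).card : ℝ)
      = (BadSet A S).card - ((A j ∩ BadSet A S).card : ℝ) := by
  rw [badSet_insert]
  have h := Finset.card_inter_add_card_sdiff (BadSet A S) (A j)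
  have h2 : (A j ∩ BadSet A S).card + (BadSet A S \ A j).card = (BadSet A S).card := by
    rwa [Finset.inter_comm] at h
  push_cast [← h2]; ring

lemma exp_pow_bound (d : ℕ) (hd : 1 ≤ d) :
    1 ≤ Real.exp 1 * (1 - 1/((d:ℝ)+1))^d := by
  have ht : (0:ℝ) < d := by exact_mod_cast hd
  have hnn : (0:ℝ) ≤ 1 - 1/((d:ℝ)+1) := by
    rw [sub_nonneg, div_le_one (by linarith)]; linarith
  have h2 : (1 + 1/(d:ℝ)) ≤ Real.exp (1/(d:ℝ)) := by
    have := Real.add_one_le_exp (1/(d:ℝ)); linarith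
  have h3 : (1 + 1/(d:ℝ))^d ≤ Real.exp 1 := by
    calc (1 + 1/(d:ℝ))^d ≤ (Real.exp (1/(d:ℝ)))^d := by
          apply pow_le_pow_left₀ (by positivity) h2
      _ = Real.exp 1 := by
          rw [← Real.exp_nat_mul]; congr 1; field_simp
  have hkey : (1 + 1/(d:ℝ)) * (1 - 1/((d:ℝ)+1)) = 1 := by
    field_simp; ring
  calc (1:ℝ) = ((1 + 1/(d:ℝ)) * (1 - 1/((d:ℝ)+1)))^d := by rw [hkey, one_pow]
    _ = (1+1/(d:ℝ))^d * (1 - 1/((d:ℝ)+1))^d := mul_pow _ _ _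
    _ ≤ Real.exp 1 * (1 - 1/((d:ℝ)+1))^d := by
        apply mul_le_mul_of_nonneg_right h3 (pow_nonneg hnn d)

lemma lll_main (A : ι → Finset (κ → Bool)) (C : ι → Finset κ)
    (p : ℝ) (hp0 : 0 ≤ p) (d : ℕ) (hd1 : 1 ≤ d)
    (hdep : ∀ i, TDependsOn (A i) (C i))
    (hp : ∀ i, ((A i).card : ℝ) ≤ p * Fintype.card (κ → Bool))
    (hΓ : ∀ i : ι, ((univ.filter fun j => j ≠ i ∧ ¬ Disjoint (C i) (C j)).card ≤ d))
    (hpx : Real.exp 1 * p * ((d:ℝ) + 1) ≤ 1) :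
    ∀ m : ℕ, ∀ S : Finset ι, S.card ≤ m → ∀ i,
      ((A i ∩ BadSet A S).card : ℝ) ≤ (1 / ((d:ℝ)+1)) * (BadSet A S).card := by
  have hd1' : (1:ℝ) ≤ (d:ℝ) := by exact_mod_cast hd1
  set x : ℝ := 1 / ((d:ℝ)+1) with hxdef
  have hx0 : 0 < x := by positivity
  have hx1 : 1 - x ≥ 0 := by
    have : x ≤ 1 := by rw [hxdef, div_le_one (by linarith)]; linarith
    linarith
  have hepos : (0:ℝ) < Real.exp 1 := Real.exp_pos 1
  -- p ≤ x * (1-x)^d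
  have hpxd : p ≤ x * (1 - x)^d := by
    have hexp := exp_pow_bound d hd1
    have h1 : p ≤ x * (1 / Real.exp 1) := by
      rw [hxdef]
      rw [div_mul_div_comm, one_mul, le_div_iff₀ (by positivity)]
      calc p * (((d:ℝ)+1) * Real.exp 1) = Real.exp 1 * p * ((d:ℝ)+1) := by ring
        _ ≤ 1 := hpx
    have h2 : 1 / Real.exp 1 ≤ (1 - x)^d := by
      rw [div_le_iff₀ hepos]
      calc (1:ℝ) ≤ Real.exp 1 * (1 - x)^d := hexp
        _ = (1 - x)^d * Real.exp 1 := by ring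
    calc p ≤ x * (1 / Real.exp 1) := h1
      _ ≤ x * (1 - x)^d := mul_le_mul_of_nonneg_left h2 hx0.le
  intro m
  induction m using Nat.strong_induction_on with
  | _ m IH =>
  intro S hS i
  by_cases hiS : i ∈ S
  · have hempty : A i ∩ BadSet A S = ∅ := by
      ext f; simp only [mem_inter, BadSet, mem_filter, mem_univ, true_and,
        notMem_empty, iff_false]
      rintro ⟨hf1, hf2⟩; exact hf2 i hiS hf1
    rw [hempty]
    simp only [card_empty, Nat.cast_zero]
    positivity
  · set S1 : Finset ι := S.filter (fun j => ¬ Disjoint (C i) (C j)) with hS1def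
    set S2 : Finset ι := S.filter (fun j => Disjoint (C i) (C j)) with hS2def
    have hS2S : S2 ⊆ S := filter_subset _ _
    have hunion : S2 ∪ S1 = S := filter_union_filter_not_eq _ S
    -- peeling
    have peel : ∀ U : Finset ι, U ⊆ S1 →
        (1 - x)^(U.card) * ((BadSet A S2).card : ℝ) ≤ ((BadSet A (S2 ∪ U)).card : ℝ) := by
      intro U
      induction U using Finset.induction_on with
      | empty => intro _; simp
      | @insert j U hjU ihU =>
        intro hsub
        have hjS1 : j ∈ S1 := hsub (mem_insert_self _ _)
        have ih := ihU (fun y hy => hsub (mem_insert_of_mem hy))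
        have hjS : j ∈ S := (mem_filter.mp hjS1).1
        have hjnS2 : j ∉ S2 ∪ U := by
          intro hmem
          rcases mem_union.mp hmem with h' | h'
          · exact (mem_filter.mp hjS1).2 (mem_filter.mp h').2
          · exact hjU h'
        have hsubS : S2 ∪ U ⊆ S := by
          apply union_subset hS2S
          exact subset_trans (fun y hy => hsub (mem_insert_of_mem hy))
            (filter_subset _ _)
        have hcardlt : (S2 ∪ U).card < m := by
          have h1 : (S2 ∪ U).card < S.card :=
            card_lt_card (ssubset_iff_of_subset hsubS |>.mpr ⟨j, hjS, hjnS2⟩)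
          omega
        have hind := IH (S2 ∪ U).card hcardlt (S2 ∪ U) le_rfl j
        have hrec := card_badSet_insert A (S2 ∪ U) j
        have heq : S2 ∪ insert j U = insert j (S2 ∪ U) := Finset.union_insert _ _ _
        rw [heq, hrec, card_insert_of_notMem hjU]
        have hb2 : (0:ℝ) ≤ (BadSet A S2).card := by positivity
        have hbu : (0:ℝ) ≤ (BadSet A (S2 ∪ U)).card := by positivity
        calc (1-x)^(U.card + 1) * ((BadSet A S2).card : ℝ)
            = (1-x) * ((1-x)^(U.card) * ((BadSet A S2).card : ℝ)) := by ring
          _ ≤ (1-x) * ((BadSet A (S2 ∪ U)).card : ℝ) :=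
              mul_le_mul_of_nonneg_left ih hx1
          _ = ((BadSet A (S2 ∪ U)).card : ℝ) - x * ((BadSet A (S2 ∪ U)).card : ℝ) := by
              ring
          _ ≤ ((BadSet A (S2 ∪ U)).card : ℝ) - ((A j ∩ BadSet A (S2 ∪ U)).card : ℝ) := by
              linarith [hind]
    have peelS1 : (1 - x)^(S1.card) * ((BadSet A S2).card : ℝ) ≤ ((BadSet A S).card : ℝ) := by
      have := peel S1 (Finset.Subset.refl S1)
      rwa [hunion] at this
    -- S1.card ≤ d
    have hS1d : S1.card ≤ d := by
      refine le_trans (card_le_card ?_) (hΓ i)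
      intro j hj
      simp only [mem_filter, mem_univ, true_and]
      refine ⟨fun hji => hiS (hji ▸ (mem_filter.mp hj).1), (mem_filter.mp hj).2⟩
    -- independence
    have hdisj : Disjoint (C i) (S2.biUnion C) := by
      rw [Finset.disjoint_biUnion_right]
      intro j hj
      exact (mem_filter.mp hj).2
    have hcount := dep_card_inter (A i) (BadSet A S2) (hdep i)
      (depends_badSet A C hdep S2) hdisj
    have hΩpos : (0:ℝ) < Fintype.card (κ → Bool) := by
      exact_mod_cast Fintype.card_pos
    have hindep : ((A i ∩ BadSet A S2).card : ℝ) ≤ p * ((BadSet A S2).card : ℝ) := by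
      have hcast : ((A i ∩ BadSet A S2).card : ℝ) * (Fintype.card (κ → Bool) : ℝ)
          = ((A i).card : ℝ) * ((BadSet A S2).card : ℝ) := by exact_mod_cast hcount
      rw [← mul_le_mul_iff_left₀ hΩpos, hcast]
      calc ((A i).card : ℝ) * ((BadSet A S2).card : ℝ)
          ≤ (p * (Fintype.card (κ → Bool) : ℝ)) * ((BadSet A S2).card : ℝ) := by
            apply mul_le_mul_of_nonneg_right (hp i) (by positivity)
        _ = p * ((BadSet A S2).card : ℝ) * (Fintype.card (κ → Bool) : ℝ) := by ring
    -- monotone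
    have hmono : ((A i ∩ BadSet A S).card : ℝ) ≤ ((A i ∩ BadSet A S2).card : ℝ) := by
      exact_mod_cast card_le_card (inter_subset_inter (Finset.Subset.refl _)
        (badSet_mono A hS2S))
    -- pow comparison
    have hpow : (1-x)^d ≤ (1-x)^(S1.card) := by
      apply pow_le_pow_of_le_one hx1 (by linarith) hS1d
    calc ((A i ∩ BadSet A S).card : ℝ) ≤ ((A i ∩ BadSet A S2).card : ℝ) := hmono
      _ ≤ p * ((BadSet A S2).card : ℝ) := hindep
      _ ≤ (x * (1-x)^(S1.card)) * ((BadSet A S2).card : ℝ) := by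
          apply mul_le_mul_of_nonneg_right _ (by positivity)
          calc p ≤ x * (1-x)^d := hpxd
            _ ≤ x * (1-x)^(S1.card) := mul_le_mul_of_nonneg_left hpow hx0.le
      _ = x * ((1-x)^(S1.card) * ((BadSet A S2).card : ℝ)) := by ring
      _ ≤ x * ((BadSet A S).card : ℝ) := mul_le_mul_of_nonneg_left peelS1 hx0.le

end LLL

section
variable {κ ι : Type*} [Fintype κ] [DecidableEq κ] [Fintype ι] [DecidableEq ι]
open scoped Classical

lemma lll_exists (A : ι → Finset (κ → Bool)) (C : ι → Finset κ)
    (p : ℝ) (hp0 : 0 ≤ p) (d : ℕ) (hd1 : 1 ≤ d)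
    (hdep : ∀ i, TDependsOn (A i) (C i))
    (hp : ∀ i, ((A i).card : ℝ) ≤ p * Fintype.card (κ → Bool))
    (hΓ : ∀ i : ι, ((univ.filter fun j => j ≠ i ∧ ¬ Disjoint (C i) (C j)).card ≤ d))
    (hpx : Real.exp 1 * p * ((d:ℝ) + 1) ≤ 1) :
    ∃ f : κ → Bool, ∀ i, f ∉ A i := by
  have main := lll_main A C p hp0 d hd1 hdep hp hΓ hpx
  have hx1 : 1 / ((d:ℝ)+1) ≤ 1/2 := by
    apply div_le_div_of_nonneg_left (by norm_num) (by norm_num)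
    have : (1:ℝ) ≤ (d:ℝ) := by exact_mod_cast hd1
    linarith
  have hpos : ∀ S : Finset ι, 0 < (BadSet A S).card := by
    intro S
    induction S using Finset.induction_on with
    | empty =>
      have : BadSet A (∅ : Finset ι) = univ := by
        ext f; simp [BadSet]
      rw [this, card_univ]
      exact Fintype.card_pos
    | @insert j S hjS ih =>
      have hrec := card_badSet_insert A S j
      have hb := main S.card S le_rfl j
      have hBpos : (0:ℝ) < (BadSet A S).card := by exact_mod_cast ih
      have : (0:ℝ) < ((BadSet A (insert j S)).card : ℝ) := by
        rw [hrec]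
        have : ((A j ∩ BadSet A S).card : ℝ) ≤ (1/2) * (BadSet A S).card := by
          calc ((A j ∩ BadSet A S).card : ℝ) ≤ (1 / ((d:ℝ)+1)) * (BadSet A S).card := hb
            _ ≤ (1/2) * (BadSet A S).card :=
              mul_le_mul_of_nonneg_right hx1 hBpos.le
        linarith
      exact_mod_cast this
  obtain ⟨f, hf⟩ := card_pos.mp (hpos univ)
  refine ⟨f, fun i => ?_⟩
  exact (mem_filter.mp hf).2 i (mem_univ i)
end

def arcOf (n : ℕ) (f : Fin n × Fin n → Bool) (i j : Fin n) : Bool :=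
  if i < j then f (i, j) else if j < i then !(f (j, i)) else false

def tournOf (n : ℕ) (f : Fin n × Fin n → Bool) : Tournament n where
  arc := arcOf n f
  loopless := fun i => by simp [arcOf]
  oneOf := fun i j hij => by
    rcases lt_or_gt_of_ne hij with h | h
    · simp [arcOf, h, not_lt_of_gt h, asymm h]
    · simp [arcOf, h, not_lt_of_gt h, asymm h]

lemma arcOf_lt {n : ℕ} (f : Fin n × Fin n → Bool) {i j : Fin n} (h : i < j) :
    arcOf n f i j = f (i, j) := by simp [arcOf, h]

lemma arcOf_gt {n : ℕ} (f : Fin n × Fin n → Bool) {i j : Fin n} (h : j < i) :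
    arcOf n f i j = !(f (j, i)) := by simp [arcOf, h, not_lt_of_gt h, asymm h]

open scoped Classical

def pairsIn {n : ℕ} (S : Finset (Fin n)) : Finset (Fin n × Fin n) :=
  (S ×ˢ S).filter fun c => c.1 < c.2

lemma mem_pairsIn {n : ℕ} {S : Finset (Fin n)} {c : Fin n × Fin n} :
    c ∈ pairsIn S ↔ c.1 ∈ S ∧ c.2 ∈ S ∧ c.1 < c.2 := by
  simp [pairsIn, mem_filter, mem_product, and_assoc]

lemma two_mul_card_pairsIn {n : ℕ} (S : Finset (Fin n)) :
    2 * (pairsIn S).card = S.card * S.card - S.card := by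
  set D' : Finset (Fin n × Fin n) := (S ×ˢ S).filter (fun c => c.2 < c.1) with hD'
  have hcards : (pairsIn S).card = D'.card := by
    apply Finset.card_nbij' (i := Prod.swap) (j := Prod.swap)
    · intro c hc
      rw [Finset.mem_coe, mem_pairsIn] at hc
      simp [hD', mem_filter, mem_product, hc.1, hc.2.1, hc.2.2]
    · intro c hc
      simp only [hD', Finset.mem_coe, mem_filter, mem_product] at hc
      rw [Finset.mem_coe, mem_pairsIn]
      exact ⟨hc.1.2, hc.1.1, hc.2⟩
    · intro c _; simp
    · intro c _; simp
  have hdisj : Disjoint (pairsIn S) D' := by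
    rw [Finset.disjoint_left]
    intro c hc hc'
    rw [mem_pairsIn] at hc
    simp only [hD', mem_filter] at hc'
    exact absurd hc'.2 (asymm hc.2.2)
  have hunion : pairsIn S ∪ D' = S.offDiag := by
    ext c
    simp only [pairsIn, hD', mem_union, mem_filter, Finset.mem_offDiag, mem_product]
    constructor
    · rintro (⟨⟨h1, h2⟩, h3⟩ | ⟨⟨h1, h2⟩, h3⟩)
      · exact ⟨h1, h2, ne_of_lt h3⟩
      · exact ⟨h1, h2, (ne_of_lt h3).symm⟩
    · rintro ⟨h1, h2, h3⟩
      rcases lt_or_gt_of_ne h3 with h | h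
      · exact Or.inl ⟨⟨h1, h2⟩, h⟩
      · exact Or.inr ⟨⟨h1, h2⟩, h⟩
  have := Finset.card_union_of_disjoint hdisj
  rw [hunion, Finset.offDiag_card, ← hcards] at this
  omega

noncomputable def EvL (n : ℕ) (l : List (Fin n)) : Finset (Fin n × Fin n → Bool) :=
  univ.filter fun f => l.Pairwise fun u v => arcOf n f u v = true

lemma evL_determines {n : ℕ} {S : Finset (Fin n)} {l : List (Fin n)}
    (hnd : l.Nodup) (hts : l.toFinset = S) {f : Fin n × Fin n → Bool}
    (hf : f ∈ EvL n l) {c : Fin n × Fin n} (hc : c ∈ pairsIn S) :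
    f c = decide (l.idxOf c.1 < l.idxOf c.2) := by
  obtain ⟨hu, hv, huv⟩ := mem_pairsIn.mp hc
  have hul : c.1 ∈ l := by rw [← List.mem_toFinset, hts]; exact hu
  have hvl : c.2 ∈ l := by rw [← List.mem_toFinset, hts]; exact hv
  have ha : l.idxOf c.1 < l.length := List.idxOf_lt_length_iff.mpr hul
  have hb : l.idxOf c.2 < l.length := List.idxOf_lt_length_iff.mpr hvl
  have hpw := (mem_filter.mp hf).2
  rw [List.pairwise_iff_getElem] at hpw
  rcases lt_trichotomy (l.idxOf c.1) (l.idxOf c.2) with h | h | h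
  · have := hpw _ _ ha hb h
    rw [List.getElem_idxOf ha, List.getElem_idxOf hb] at this
    rw [arcOf_lt f huv] at this
    have : f (c.1, c.2) = true := this
    simp [this, h]
  · exfalso
    exact absurd ((List.idxOf_inj hul).mp h) (ne_of_lt huv)
  · have := hpw _ _ hb ha h
    rw [List.getElem_idxOf ha, List.getElem_idxOf hb] at this
    rw [arcOf_gt f huv] at this
    have h2 : f (c.1, c.2) = false := by
      cases hfc : f (c.1, c.2) <;> simp [hfc] at this ⊢
    simp [h2, not_lt_of_gt h, h]

lemma card_EvL_le {n : ℕ} {S : Finset (Fin n)} {l : List (Fin n)}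
    (hnd : l.Nodup) (hts : l.toFinset = S) :
    (EvL n l).card ≤ 2 ^ (n * n - (pairsIn S).card) := by
  have hinj : Set.InjOn (fun (f : Fin n × Fin n → Bool) (c : {c : Fin n × Fin n // c ∉ pairsIn S}) => f c.1)
      ↑(EvL n l) := by
    intro f hf g hg hfg
    funext c
    by_cases hc : c ∈ pairsIn S
    · rw [evL_determines hnd hts hf hc, evL_determines hnd hts hg hc]
    · exact congrFun hfg ⟨c, hc⟩
  have hle := Finset.card_le_card_of_injOn _ (fun f _ => Finset.mem_univ _) hinj
  calc (EvL n l).card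
      ≤ (univ : Finset ({c : Fin n × Fin n // c ∉ pairsIn S} → Bool)).card := hle
    _ = 2 ^ (n * n - (pairsIn S).card) := by
        rw [card_univ, Fintype.card_fun, Fintype.card_bool, Fintype.card_subtype_compl,
          Fintype.card_prod, Fintype.card_fin]
        simp [Fintype.card_coe]

lemma card_pairsIn {n k : ℕ} {S : Finset (Fin n)} (hS : S.card = k) :
    (pairsIn S).card = k * (k - 1) / 2 := by
  have h2 := two_mul_card_pairsIn S
  rw [hS] at h2
  have hkk : k * k - k = k * (k - 1) := by
    rcases k with _ | m
    · simp
    · have : (m+1)*(m+1) = (m+1)*m + (m+1) := by ring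
      simp only [Nat.succ_sub_one]
      omega
  rw [hkk] at h2
  omega

noncomputable def AE (n k : ℕ) (S : Finset (Fin n)) : Finset (Fin n × Fin n → Bool) :=
  if S.card = k then univ.filter (fun f => (tournOf n f).HasTransTournOn S) else ∅

lemma card_AE_le (n k : ℕ) (S : Finset (Fin n)) :
    (AE n k S).card ≤ k.factorial * 2 ^ (n * n - k * (k - 1) / 2) := by
  by_cases hS : S.card = k
  swap
  · simp [AE, hS]
  set LS : Finset (List (Fin n)) := ((S.sort (· ≤ ·)).permutations).toFinset with hLS
  have hmemLS : ∀ l ∈ LS, l.Nodup ∧ l.toFinset = S := by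
    intro l hl
    rw [hLS, List.mem_toFinset, List.mem_permutations] at hl
    constructor
    · exact hl.nodup_iff.mpr (S.sort_nodup (· ≤ ·))
    · rw [List.toFinset_eq_of_perm _ _ hl, S.sort_toFinset (· ≤ ·)]
  have hsub : AE n k S ⊆ LS.biUnion (EvL n) := by
    intro f hf
    rw [AE, if_pos hS, mem_filter] at hf
    obtain ⟨l, hnd, hts, hpw⟩ := hf.2
    have hlLS : l ∈ LS := by
      rw [hLS, List.mem_toFinset, List.mem_permutations]
      exact List.perm_of_nodup_nodup_toFinset_eq hnd (S.sort_nodup (· ≤ ·))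
        (hts.trans (S.sort_toFinset (· ≤ ·)).symm)
    exact mem_biUnion.mpr ⟨l, hlLS, mem_filter.mpr ⟨mem_univ _, hpw⟩⟩
  have hLScard : LS.card = k.factorial := by
    rw [hLS, List.toFinset_card_of_nodup
      (List.nodup_permutations _ (S.sort_nodup (· ≤ ·))),
      List.length_permutations, Finset.length_sort, hS]
  calc (AE n k S).card ≤ (LS.biUnion (EvL n)).card := card_le_card hsub
    _ ≤ ∑ l ∈ LS, (EvL n l).card := card_biUnion_le
    _ ≤ ∑ _l ∈ LS, 2 ^ (n * n - k * (k - 1) / 2) := by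
        apply Finset.sum_le_sum
        intro l hl
        obtain ⟨hnd, hts⟩ := hmemLS l hl
        have := card_EvL_le hnd hts
        rwa [card_pairsIn hS] at this
    _ = k.factorial * 2 ^ (n * n - k * (k - 1) / 2) := by
        rw [Finset.sum_const, hLScard, smul_eq_mul]

noncomputable def CE (n k : ℕ) (S : Finset (Fin n)) : Finset (Fin n × Fin n) :=
  if S.card = k then pairsIn S else ∅

lemma depends_AE (n k : ℕ) (S : Finset (Fin n)) :
    TDependsOn (AE n k S) (CE n k S) := by
  by_cases hS : S.card = k
  swap
  · intro f g _ hf; rw [AE, if_neg hS] at hf; exact absurd hf (notMem_empty f)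
  intro f g hfg hf
  rw [CE, if_pos hS] at hfg
  rw [AE, if_pos hS, mem_filter] at hf ⊢
  obtain ⟨l, hnd, hts, hpw⟩ := hf.2
  refine ⟨mem_univ _, l, hnd, hts, ?_⟩
  refine List.Pairwise.imp_of_mem ?_ (hnd.and hpw)
  rintro u v hu hv ⟨hne, harc⟩
  have huS : u ∈ S := by rw [← hts]; exact List.mem_toFinset.mpr hu
  have hvS : v ∈ S := by rw [← hts]; exact List.mem_toFinset.mpr hv
  show (tournOf n g).arc u v = true
  have harc' : arcOf n f u v = true := harc
  rcases lt_or_gt_of_ne hne with h | h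
  · show arcOf n g u v = true
    rw [arcOf_lt g h]
    rw [arcOf_lt f h] at harc'
    rw [← hfg (u, v) (mem_pairsIn.mpr ⟨huS, hvS, h⟩)]
    exact harc'
  · show arcOf n g u v = true
    rw [arcOf_gt g h]
    rw [arcOf_gt f h] at harc'
    rw [← hfg (v, u) (mem_pairsIn.mpr ⟨hvS, huS, h⟩)]
    exact harc'

lemma card_inter_eq_le (n k : ℕ) (S : Finset (Fin n)) (hS : S.card = k) (j : ℕ) :
    (univ.filter fun T : Finset (Fin n) => T.card = k ∧ (S ∩ T).card = j).card
      ≤ k.choose j * (n - k).choose (k - j) := by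
  have hinj : Set.InjOn (fun T : Finset (Fin n) => (S ∩ T, T \ S))
      ↑(univ.filter fun T : Finset (Fin n) => T.card = k ∧ (S ∩ T).card = j) := by
    intro T1 _ T2 _ heq
    have h1 : S ∩ T1 = S ∩ T2 := congrArg Prod.fst heq
    have h2 : T1 \ S = T2 \ S := congrArg Prod.snd heq
    ext y
    constructor <;> intro hy
    · by_cases hyS : y ∈ S
      · have : y ∈ S ∩ T2 := h1 ▸ (mem_inter.mpr ⟨hyS, hy⟩)
        exact (mem_inter.mp this).2
      · have : y ∈ T2 \ S := h2 ▸ (mem_sdiff.mpr ⟨hy, hyS⟩)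
        exact (mem_sdiff.mp this).1
    · by_cases hyS : y ∈ S
      · have : y ∈ S ∩ T1 := h1 ▸ (mem_inter.mpr ⟨hyS, hy⟩)
        exact (mem_inter.mp this).2
      · have : y ∈ T1 \ S := h2 ▸ (mem_sdiff.mpr ⟨hy, hyS⟩)
        exact (mem_sdiff.mp this).1
  have hmaps : ∀ T ∈ (univ.filter fun T : Finset (Fin n) =>
      T.card = k ∧ (S ∩ T).card = j),
      (S ∩ T, T \ S) ∈ (S.powersetCard j) ×ˢ (Sᶜ.powersetCard (k - j)) := by
    intro T hT
    rw [mem_filter] at hT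
    obtain ⟨_, hTk, hSTj⟩ := hT
    rw [mem_product]
    constructor
    · exact Finset.mem_powersetCard.mpr ⟨inter_subset_left, hSTj⟩
    · refine Finset.mem_powersetCard.mpr ⟨fun y hy => ?_, ?_⟩
      · rw [Finset.mem_compl]; exact (mem_sdiff.mp hy).2
      · have h3 := Finset.card_sdiff_add_card_inter T S
        rw [Finset.inter_comm T S] at h3
        show #(T \ S) = k - j
        omega
  calc (univ.filter fun T : Finset (Fin n) => T.card = k ∧ (S ∩ T).card = j).card
      ≤ ((S.powersetCard j) ×ˢ (Sᶜ.powersetCard (k - j))).card :=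
        Finset.card_le_card_of_injOn _ hmaps hinj
    _ = k.choose j * (n - k).choose (k - j) := by
        rw [Finset.card_product, Finset.card_powersetCard, Finset.card_powersetCard,
          hS, Finset.card_compl, Fintype.card_fin, hS]

lemma card_neighbors_le (n k : ℕ) (hk : 2 ≤ k) (S : Finset (Fin n)) :
    (univ.filter fun T : Finset (Fin n) =>
        T ≠ S ∧ ¬ Disjoint (CE n k S) (CE n k T)).card
      ≤ ∑ j ∈ Finset.Icc 2 k, k.choose j * (n - k).choose (k - j) := by
  by_cases hS : S.card = k
  swap
  · have : (univ.filter fun T : Finset (Fin n) =>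
        T ≠ S ∧ ¬ Disjoint (CE n k S) (CE n k T)) = ∅ := by
      ext T; simp only [mem_filter, mem_univ, true_and, notMem_empty, iff_false]
      rintro ⟨-, hdisj⟩
      rw [CE, if_neg hS] at hdisj
      exact hdisj (Finset.disjoint_empty_left _)
    rw [this]; simp
  have hsub : (univ.filter fun T : Finset (Fin n) =>
      T ≠ S ∧ ¬ Disjoint (CE n k S) (CE n k T))
      ⊆ (Finset.Icc 2 k).biUnion (fun j => univ.filter fun T : Finset (Fin n) =>
          T.card = k ∧ (S ∩ T).card = j) := by
    intro T hT
    rw [mem_filter] at hT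
    obtain ⟨-, -, hdisj⟩ := hT
    by_cases hTk : T.card = k
    swap
    · exfalso
      have hCT : CE n k T = ∅ := by rw [CE, if_neg hTk]
      rw [hCT] at hdisj
      exact hdisj (Finset.disjoint_empty_right _)
    have hCS : CE n k S = pairsIn S := by rw [CE, if_pos hS]
    have hCT : CE n k T = pairsIn T := by rw [CE, if_pos hTk]
    rw [hCS, hCT, Finset.not_disjoint_iff] at hdisj
    obtain ⟨c, hcS, hcT⟩ := hdisj
    rw [mem_pairsIn] at hcS hcT
    have hpair : ({c.1, c.2} : Finset (Fin n)) ⊆ S ∩ T := by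
      intro y hy
      rcases Finset.mem_insert.mp hy with rfl | hy
      · exact mem_inter.mpr ⟨hcS.1, hcT.1⟩
      · rw [Finset.mem_singleton.mp hy]
        exact mem_inter.mpr ⟨hcS.2.1, hcT.2.1⟩
    have hc2 : ({c.1, c.2} : Finset (Fin n)).card = 2 := by
      rw [Finset.card_insert_of_notMem (by
        rw [Finset.mem_singleton]; exact ne_of_lt hcS.2.2), Finset.card_singleton]
    have h2le : 2 ≤ (S ∩ T).card := hc2 ▸ Finset.card_le_card hpair
    have hjk : (S ∩ T).card ≤ k := hS ▸ Finset.card_le_card inter_subset_left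
    exact mem_biUnion.mpr ⟨(S ∩ T).card, Finset.mem_Icc.mpr ⟨h2le, hjk⟩,
      mem_filter.mpr ⟨mem_univ _, hTk, rfl⟩⟩
  calc (univ.filter fun T : Finset (Fin n) =>
      T ≠ S ∧ ¬ Disjoint (CE n k S) (CE n k T)).card
      ≤ ((Finset.Icc 2 k).biUnion (fun j => univ.filter fun T : Finset (Fin n) =>
          T.card = k ∧ (S ∩ T).card = j)).card := card_le_card hsub
    _ ≤ ∑ j ∈ Finset.Icc 2 k, (univ.filter fun T : Finset (Fin n) =>
          T.card = k ∧ (S ∩ T).card = j).card := card_biUnion_le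
    _ ≤ ∑ j ∈ Finset.Icc 2 k, k.choose j * (n - k).choose (k - j) :=
        Finset.sum_le_sum (fun j _ => card_inter_eq_le n k S hS j)

theorem stmt17 (n k : ℕ) (hk : 2 ≤ k) (hkn : k ≤ n)
    (h : Real.exp 1 *
        (1 + ∑ j ∈ Finset.Icc 2 k, ((k.choose j * (n - k).choose (k - j) : ℕ) : ℝ)) *
        (k.factorial : ℝ) / 2 ^ (k * (k - 1) / 2) < 1) :
    ∃ T : Tournament n, ∀ S : Finset (Fin n), S.card = k →
      ¬ T.HasTransTournOn S := by
  classical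
  set N : ℕ := ∑ j ∈ Finset.Icc 2 k, k.choose j * (n - k).choose (k - j) with hN
  set m : ℕ := k * (k - 1) / 2 with hm
  set p : ℝ := (k.factorial : ℝ) / 2 ^ m with hp
  have hmnn : m ≤ n * n := by
    have h1 : m ≤ k * (k - 1) := Nat.div_le_self _ _
    have h2 : k * (k - 1) ≤ k * k := Nat.mul_le_mul_left _ (Nat.sub_le _ _)
    have h3 : k * k ≤ n * n := Nat.mul_le_mul hkn hkn
    omega
  have hΩ : (Fintype.card (Fin n × Fin n → Bool) : ℝ) = 2 ^ (n * n) := by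
    rw [Fintype.card_fun, Fintype.card_bool, Fintype.card_prod, Fintype.card_fin]
    push_cast
    ring
  have hd1 : 1 ≤ N := by
    have hterm : (fun j => k.choose j * (n - k).choose (k - j)) k ≤ N := by
      apply Finset.single_le_sum (f := fun j => k.choose j * (n - k).choose (k - j))
        (fun _ _ => Nat.zero_le _) (Finset.mem_Icc.mpr ⟨hk, le_refl k⟩)
    simpa [Nat.choose_self, Nat.choose_zero_right] using hterm
  have hp0 : (0:ℝ) ≤ p := by positivity
  have hpA : ∀ S : Finset (Fin n),
      ((AE n k S).card : ℝ) ≤ p * Fintype.card (Fin n × Fin n → Bool) := by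
    intro S
    have hnat := card_AE_le n k S
    have hcast : ((AE n k S).card : ℝ) ≤ (k.factorial : ℝ) * 2 ^ (n * n - m) := by
      exact_mod_cast hnat
    refine hcast.trans (le_of_eq ?_)
    rw [hΩ, hp]
    rw [div_mul_eq_mul_div, eq_div_iff (by positivity)]
    rw [mul_assoc, ← pow_add, Nat.sub_add_cancel hmnn]
  have hΓ : ∀ S : Finset (Fin n),
      ((Finset.univ.filter fun T => T ≠ S ∧
        ¬ Disjoint (CE n k S) (CE n k T)).card ≤ N) :=
    fun S => card_neighbors_le n k hk S
  have hpx : Real.exp 1 * p * ((N:ℝ) + 1) ≤ 1 := by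
    have hsum : (∑ j ∈ Finset.Icc 2 k,
        ((k.choose j * (n - k).choose (k - j) : ℕ) : ℝ)) = (N : ℝ) := by
      rw [hN]; push_cast; ring
    have heq : Real.exp 1 * p * ((N:ℝ) + 1)
        = Real.exp 1 * (1 + (N:ℝ)) * (k.factorial : ℝ) / 2 ^ m := by
      rw [hp]; ring
    rw [heq, ← hsum]
    exact le_of_lt (by rw [hm]; exact h)
  obtain ⟨f, hf⟩ := lll_exists (AE n k) (CE n k) p hp0 N hd1
    (fun S => depends_AE n k S) hpA hΓ hpx
  refine ⟨tournOf n f, fun S hSk hTrans => ?_⟩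
  apply hf S
  rw [AE, if_pos hSk, Finset.mem_filter]
  exact ⟨Finset.mem_univ _, hTrans⟩
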